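/- arXiv:1305.6260 — 2 statements merged into one kernel-verified Lean document; each statement's English description precedes it below -/
import Mathlib

section
/- Let (τ_i)_{i≥1} be nonnegative i.i.d. random variables. For any reals α > 0, β > 0 and integers L ≥ K ≥ 1 satisfying βK ≤ αL: E[(min_{1≤i≤L} τ_i)^β] ≤ 1 + (β/α) · E[(min_{1≤i≤K} τ_i)^α]^{L/K}. -/
open MeasureTheory ProbabilityTheory Filter ENNReal

noncomputable section

namespace FPP

/-- Vertices of the `d`-dimensional integer lattice. -/
abbrev V (d : ℕ) := Fin d → ℤ

/-- ℓ¹-distance on the lattice. -/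
def dist1 {d : ℕ} (x y : V d) : ℕ := ∑ i, (x i - y i).natAbs

/-- ℓ¹-norm on the lattice. -/
def norm1 {d : ℕ} (x : V d) : ℕ := ∑ i, (x i).natAbs

lemma dist1_symm {d : ℕ} (x y : V d) : dist1 x y = dist1 y x :=
  Finset.sum_congr rfl fun i _ => by omega

/-- The set of nearest-neighbour edges of the lattice, as unordered pairs of vertices. -/
def EdgeSet (d : ℕ) : Set (Sym2 (V d)) :=
  Sym2.fromRel (r := fun x y => dist1 x y = 1) ⟨fun _ _ h => by rwa [dist1_symm]⟩

/-- A lattice path: consecutive vertices are at ℓ¹-distance one. -/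
def IsLatticePath {d : ℕ} (p : List (V d)) : Prop :=
  p.Chain' fun a b => dist1 a b = 1

variable {d : ℕ} {Ω : Type*}

/-- The total weight of a path: the sum of the passage times of its edges. -/
def pathWeight (τ : Sym2 (V d) → Ω → ℝ) (ω : Ω) (p : List (V d)) : ℝ :=
  ((p.zip p.tail).map fun q => τ s(q.1, q.2) ω).sum

/-- The travel time between two vertices. -/
def T (τ : Sym2 (V d) → Ω → ℝ) (ω : Ω) (y z : V d) : ℝ :=
  sInf {c | ∃ p : List (V d), IsLatticePath p ∧ p.head? = some y ∧
    p.getLast? = some z ∧ pathWeight τ ω p = c}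

/-- The travel time between two vertex sets (infimum over lattice paths from `A` to `B`). -/
def TSet (τ : Sym2 (V d) → Ω → ℝ) (ω : Ω) (A B : Set (V d)) : ℝ :=
  sInf {c | ∃ p : List (V d), IsLatticePath p ∧ (∃ a ∈ A, p.head? = some a) ∧
    (∃ b ∈ B, p.getLast? = some b) ∧ pathWeight τ ω p = c}

/-- Point-to-set travel time `inf {T(y,z) : z ∈ A}`. -/
def TtoSet (τ : Sym2 (V d) → Ω → ℝ) (ω : Ω) (y : V d) (A : Set (V d)) : ℝ :=
  sInf {c | ∃ z ∈ A, T τ ω y z = c}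

/-- The travel time between `A` and `B` restricted to paths all of whose vertices lie in `S`. -/
def Tres (τ : Sym2 (V d) → Ω → ℝ) (ω : Ω) (S A B : Set (V d)) : ℝ :=
  sInf {c | ∃ p : List (V d), IsLatticePath p ∧ (∀ v ∈ p, v ∈ S) ∧
    (∃ a ∈ A, p.head? = some a) ∧ (∃ b ∈ B, p.getLast? = some b) ∧ pathWeight τ ω p = c}

/-- The standard basis vectors of the lattice. -/
def stdBasis (d : ℕ) (i : Fin d) : V d := fun j => if j = i then 1 else 0

/-- The minimum passage time among the `2d` edges incident to the origin. -/
def Ymin (τ : Sym2 (V d) → Ω → ℝ) (ω : Ω) : ℝ :=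
  sInf {x | ∃ i : Fin d, x = τ s(0, stdBasis d i) ω ∨ x = τ s(0, -stdBasis d i) ω}

/-- The passage times are measurable, nonnegative, independent and identically distributed. -/
def IID [MeasurableSpace Ω] (τ : Sym2 (V d) → Ω → ℝ) (P : Measure Ω) : Prop :=
  (∀ e, Measurable (τ e)) ∧ (∀ e ω, 0 ≤ τ e ω) ∧
    iIndepFun (fun e : EdgeSet d => τ e.1) P ∧
    ∀ e e' : EdgeSet d, IdentDistrib (τ e.1) (τ e'.1) P P

/-- `μZ` is the time constant: it is nonnegative and `T(0,nz)/n → μZ z` in probability. -/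
def IsTimeConstant [MeasurableSpace Ω] (τ : Sym2 (V d) → Ω → ℝ) (P : Measure Ω)
    (μZ : V d → ℝ) : Prop :=
  (∀ z, 0 ≤ μZ z) ∧
    ∀ z : V d, TendstoInMeasure P (fun (n : ℕ) ω => T τ ω 0 (n • z) / n) atTop fun _ => μZ z

/-- `E[Y^α]`, as a Lebesgue integral with values in `[0,∞]`. -/
def momY [MeasurableSpace Ω] (τ : Sym2 (V d) → Ω → ℝ) (P : Measure Ω) (α : ℝ) : ℝ≥0∞ :=
  ∫⁻ ω, ENNReal.ofReal (Ymin τ ω ^ α) ∂P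

/-- Embedding of the lattice into Euclidean space. -/
def toE {d : ℕ} (x : V d) : EuclideanSpace ℝ (Fin d) := WithLp.toLp 2 fun i => (x i : ℝ)

/-- The cylinder of Euclidean radius `r` around the line `ℝz`. -/
def cyl (z : V d) (r : ℝ) : Set (V d) :=
  {y | Metric.infDist (toE y) (Set.range fun a : ℝ => a • toE z) ≤ r}

/-- The hyperplane of vertices with coordinate sum `k`. -/
def Hplane (d : ℕ) (k : ℤ) : Set (V d) := {y | ∑ i, y i = k}

/-- The section `V_n(z,r)` of the cylinder. -/
def Vsec (z : V d) (r : ℝ) (n : ℕ) : Set (V d) := cyl z r ∩ Hplane d (n * norm1 z)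

/-- The set of edges `E_n(z,r)` joining `C(z,r) ∩ H_{n‖z‖-1}` to `C(z,r) ∩ H_{n‖z‖}`. -/
def Esec (z : V d) (r : ℝ) (n : ℕ) : Set (Sym2 (V d)) :=
  {e | ∃ a b : V d, e = s(a, b) ∧ dist1 a b = 1 ∧ a ∈ cyl z r ∧ b ∈ cyl z r ∧
    (∑ i, a i) = (n * norm1 z : ℕ) - 1 ∧ (∑ i, b i) = (n * norm1 z : ℕ)}

/-- The event `A_n(z,r)`: all edges of `E_n(z,r)` have passage time at most `tbar`. -/
def Asec (τ : Sym2 (V d) → Ω → ℝ) (z : V d) (r tbar : ℝ) (n : ℕ) (ω : Ω) : Prop :=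
  ∀ e ∈ Esec z r n, τ e ω ≤ tbar

/-- The regeneration times `ρ_j(z,r)`. -/
def rho (τ : Sym2 (V d) → Ω → ℝ) (z : V d) (r tbar : ℝ) (ω : Ω) : ℕ → ℕ
  | 0 => 0
  | j + 1 => sInf {n : ℕ | rho τ z r tbar ω j < n ∧ Asec τ z r tbar n ω}

/-- The cylinder time constant `μ_{C(z,r)} = lim E[T_{C(z,r)}(V_0,V_n)]/n`, in `[0,∞]`. -/
def muCyl [MeasurableSpace Ω] (τ : Sym2 (V d) → Ω → ℝ) (P : Measure Ω) (z : V d) (r : ℝ) :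
    ℝ≥0∞ :=
  atTop.liminf fun n : ℕ =>
    (∫⁻ ω, ENNReal.ofReal (Tres τ ω (cyl z r) (Vsec z r 0) (Vsec z r n)) ∂P) / n

/-- The set `Z_ε` of sites experiencing a linear order deviation. -/
def Zset (τ : Sym2 (V d) → Ω → ℝ) (μZ : V d → ℝ) (ε : ℝ) (ω : Ω) : Set (V d) :=
  {z | ε * norm1 z < |T τ ω 0 z - μZ z|}

/-- The ball `B_t` of sites reached from the origin by time `t`. -/
def Bt (τ : Sym2 (V d) → Ω → ℝ) (ω : Ω) (t : ℝ) : Set (V d) := {z | T τ ω 0 z ≤ t}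

/-- The discrete ball `B^μ_t` of the time constant. -/
def Bmu (μZ : V d → ℝ) (t : ℝ) : Set (V d) := {z | μZ z ≤ t}

/-- The set `T_ε` of times at which one of the shape theorem inclusions fails. -/
def TEps (τ : Sym2 (V d) → Ω → ℝ) (μZ : V d → ℝ) (ε : ℝ) (ω : Ω) : Set ℝ :=
  {t | 0 ≤ t ∧ (¬ Bmu μZ ((1 - ε) * t) ⊆ Bt τ ω t ∨ ¬ Bt τ ω t ⊆ Bmu μZ ((1 + ε) * t))}

end FPP


private lemma measurable_finset_inf'_aux {Ω : Type*} [MeasurableSpace Ω]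
    (τ : ℕ → Ω → ℝ) (hmeas : ∀ i, Measurable (τ i))
    (s : Finset ℕ) (hs : s.Nonempty) :
    Measurable fun ω => s.inf' hs fun i => τ i ω := by
  induction hs using Finset.Nonempty.cons_induction with
  | singleton a => simpa using hmeas a
  | cons a s ha hs ih =>
      simp only [Finset.inf'_cons (H := hs)]
      exact (hmeas a).inf ih

/-- **Lemma (moment comparison for minima).** For nonnegative i.i.d. `τ_i` and
`β K ≤ α L` with `1 ≤ K ≤ L`:
`E[(min_{i<L} τ_i)^β] ≤ 1 + (β/α) E[(min_{i<K} τ_i)^α]^{L/K}`. -/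
theorem min_moment_comparison {Ω : Type*} [MeasurableSpace Ω]
    (P : Measure Ω) [IsProbabilityMeasure P]
    (τ : ℕ → Ω → ℝ) (hmeas : ∀ i, Measurable (τ i)) (h0 : ∀ i ω, 0 ≤ τ i ω)
    (hindep : ProbabilityTheory.iIndepFun τ P)
    (hident : ∀ i j, ProbabilityTheory.IdentDistrib (τ i) (τ j) P P)
    (α β : ℝ) (hα : 0 < α) (hβ : 0 < β)
    (K L : ℕ) (hK : 1 ≤ K) (hKL : K ≤ L) (h : β * K ≤ α * L) :
    ∫⁻ ω, ENNReal.ofReal (sInf {x | ∃ i < L, x = τ i ω} ^ β) ∂P ≤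
      1 + ENNReal.ofReal (β / α) *
        (∫⁻ ω, ENNReal.ofReal (sInf {x | ∃ i < K, x = τ i ω} ^ α) ∂P) ^ ((L : ℝ) / K) := by
  classical
  have hKpos : 0 < K := hK
  have hLpos : 0 < L := lt_of_lt_of_le hK hKL
  have hKR : (0 : ℝ) < K := by exact_mod_cast hKpos
  have hLR : (0 : ℝ) < L := by exact_mod_cast hLpos
  have hneK : (Finset.range K).Nonempty := Finset.nonempty_range_iff.mpr hKpos.ne'
  have hneL : (Finset.range L).Nonempty := Finset.nonempty_range_iff.mpr hLpos.ne'
  have hsInf : ∀ (N : ℕ) (hne : (Finset.range N).Nonempty) (ω : Ω),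
      sInf {x | ∃ i < N, x = τ i ω} = (Finset.range N).inf' hne fun i => τ i ω := by
    intro N hne ω
    rw [Finset.inf'_eq_csInf_image]
    congr 1
    ext x
    simp only [Finset.coe_range, Set.mem_image, Set.mem_Iio, Set.mem_setOf_eq]
    constructor
    · rintro ⟨i, hi, rfl⟩; exact ⟨i, hi, rfl⟩
    · rintro ⟨i, hi, rfl⟩; exact ⟨i, hi, rfl⟩
  rw [show (∫⁻ ω, ENNReal.ofReal (sInf {x | ∃ i < L, x = τ i ω} ^ β) ∂P)
      = ∫⁻ ω, ENNReal.ofReal (((Finset.range L).inf' hneL fun i => τ i ω) ^ β) ∂P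
    from lintegral_congr fun ω => by rw [hsInf L hneL ω],
    show (∫⁻ ω, ENNReal.ofReal (sInf {x | ∃ i < K, x = τ i ω} ^ α) ∂P)
      = ∫⁻ ω, ENNReal.ofReal (((Finset.range K).inf' hneK fun i => τ i ω) ^ α) ∂P
    from lintegral_congr fun ω => by rw [hsInf K hneK ω]]
  set mK : Ω → ℝ := fun ω => (Finset.range K).inf' hneK fun i => τ i ω with hmKdef
  set mL : Ω → ℝ := fun ω => (Finset.range L).inf' hneL fun i => τ i ω with hmLdef
  have hmKmeas : Measurable mK := measurable_finset_inf'_aux τ hmeas _ _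
  have hmLmeas : Measurable mL := measurable_finset_inf'_aux τ hmeas _ _
  have hmKnn : ∀ ω, 0 ≤ mK ω := fun ω => Finset.le_inf' _ _ fun i _ => h0 i ω
  have hmLnn : ∀ ω, 0 ≤ mL ω := fun ω => Finset.le_inf' _ _ fun i _ => h0 i ω
  set F : ℝ≥0∞ := ∫⁻ ω, ENNReal.ofReal (mK ω ^ α) ∂P with hFdef
  have hba : (0 : ℝ) < β / α := div_pos hβ hα
  have hab : (0 : ℝ) < α / β := div_pos hα hβ
  have hLK1 : (1 : ℝ) ≤ (L : ℝ) / K := (one_le_div hKR).2 (by exact_mod_cast hKL)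
  have he0 : (0 : ℝ) ≤ (L : ℝ) / K - 1 := by linarith
  by_cases hFtop : F = ⊤
  · have : ENNReal.ofReal (β / α) * F ^ ((L : ℝ) / K) = ⊤ := by
      rw [hFtop, ENNReal.top_rpow_of_pos (by positivity)]
      exact ENNReal.mul_top (ENNReal.ofReal_pos.mpr hba).ne'
    rw [this]
    simp
  -- tail probabilities of minima
  have tail : ∀ (N : ℕ) (hne : (Finset.range N).Nonempty) (s : ℝ),
      P {ω | s < (Finset.range N).inf' hne fun i => τ i ω} = P {ω | s < τ 0 ω} ^ N := by
    intro N hne s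
    have hset : {ω | s < (Finset.range N).inf' hne fun i => τ i ω}
        = ⋂ i ∈ Finset.range N, τ i ⁻¹' Set.Ioi s := by
      ext ω
      simp [Finset.lt_inf'_iff]
    rw [hset, hindep.meas_biInter (fun i _ => ⟨Set.Ioi s, measurableSet_Ioi, rfl⟩),
      Finset.prod_congr rfl
        (fun i _ => (hident i 0).measure_mem_eq (measurableSet_Ioi (a := s))),
      Finset.prod_const, Finset.card_range]
    rfl
  -- rewriting events in terms of the minima themselves
  have hevent : ∀ (m : Ω → ℝ), (∀ ω, 0 ≤ m ω) → ∀ t : ℝ, 0 ≤ t →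
      {ω | t < m ω ^ β} = {ω | t ^ β⁻¹ < m ω} := by
    intro m hm t ht
    ext ω
    simp only [Set.mem_setOf_eq]
    exact (Real.rpow_inv_lt_iff_of_pos ht (hm ω) hβ).symm
  -- the key identity relating the two tail probabilities
  have key : ∀ t : ℝ, 0 ≤ t →
      P {ω | t < mL ω ^ β} = (P {ω | t < mK ω ^ β}) ^ ((L : ℝ) / K) := by
    intro t ht
    rw [hevent mL hmLnn t ht, hevent mK hmKnn t ht, hmKdef, hmLdef,
      tail L hneL (t ^ β⁻¹), tail K hneK (t ^ β⁻¹)]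
    rw [← ENNReal.rpow_natCast_mul _ K ((L : ℝ) / K),
      show (K : ℝ) * ((L : ℝ) / K) = (L : ℝ) by field_simp,
      ENNReal.rpow_natCast]
  -- Markov's inequality
  have hKα : Measurable fun ω => ENNReal.ofReal (mK ω ^ α) :=
    (hmKmeas.pow measurable_const).ennreal_ofReal
  have markov : ∀ t : ℝ, 0 < t →
      ENNReal.ofReal (t ^ (α / β)) * P {ω | t < mK ω ^ β} ≤ F := by
    intro t ht
    refine le_trans ?_ (mul_meas_ge_le_lintegral₀ hKα.aemeasurable (ENNReal.ofReal (t ^ (α / β))))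
    refine mul_le_mul_right (measure_mono fun ω hω => ?_) _
    simp only [Set.mem_setOf_eq] at hω ⊢
    refine ENNReal.ofReal_le_ofReal ?_
    calc t ^ (α / β) ≤ (mK ω ^ β) ^ (α / β) :=
          Real.rpow_le_rpow ht.le hω.le hab.le
      _ = mK ω ^ α := by
          rw [← Real.rpow_mul (hmKnn ω), mul_div_cancel₀ _ hβ.ne']
  -- layer cake for the L-minimum
  have layerL : ∫⁻ ω, ENNReal.ofReal (mL ω ^ β) ∂P
      = ∫⁻ t in Set.Ioi (0 : ℝ), P {ω | t < mL ω ^ β} :=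
    lintegral_eq_lintegral_meas_lt P
      (ae_of_all _ fun ω => Real.rpow_nonneg (hmLnn ω) β)
      ((hmLmeas.pow measurable_const).aemeasurable)
  -- the Tonelli bound
  have hB : ∫⁻ t in Set.Ioi (1 : ℝ),
      ENNReal.ofReal (t ^ (α / β - 1)) * P {ω | t < mK ω ^ β}
        ≤ ENNReal.ofReal (β / α) * F := by
    set Φ : ℝ → Ω → ℝ≥0∞ := fun t ω =>
      {p : ℝ × Ω | p.1 < mK p.2 ^ β}.indicator
        (fun p => ENNReal.ofReal (p.1 ^ (α / β - 1))) (t, ω) with hΦdef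
    have hSmeas : MeasurableSet {p : ℝ × Ω | p.1 < mK p.2 ^ β} :=
      measurableSet_lt measurable_fst ((hmKmeas.comp measurable_snd).pow measurable_const)
    have hΦmeas : Measurable (Function.uncurry Φ) := by
      have : Function.uncurry Φ = {p : ℝ × Ω | p.1 < mK p.2 ^ β}.indicator
          (fun p => ENNReal.ofReal (p.1 ^ (α / β - 1))) := rfl
      rw [this]
      exact ((measurable_fst.pow measurable_const).ennreal_ofReal).indicator hSmeas
    have step1 : ∀ t : ℝ, ∫⁻ ω, Φ t ω ∂P
        = ENNReal.ofReal (t ^ (α / β - 1)) * P {ω | t < mK ω ^ β} := by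
      intro t
      have hrw : (fun ω => Φ t ω) = {ω | t < mK ω ^ β}.indicator
          (fun _ => ENNReal.ofReal (t ^ (α / β - 1))) := by
        funext ω
        by_cases hc : t < mK ω ^ β <;> simp [hΦdef, Set.indicator_apply, hc]
      rw [hrw, lintegral_indicator
        (measurableSet_lt measurable_const (hmKmeas.pow measurable_const)),
        setLIntegral_const]
    have step2 : ∀ ω : Ω, ∫⁻ t in Set.Ioi (1 : ℝ), Φ t ω
        ≤ ENNReal.ofReal (β / α) * ENNReal.ofReal (mK ω ^ α) := by
      intro ω
      set b : ℝ := mK ω ^ β with hbdef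
      have hb0 : 0 ≤ b := Real.rpow_nonneg (hmKnn ω) β
      have hrw : (fun t => Φ t ω) = (Set.Iio b).indicator
          (fun t => ENNReal.ofReal (t ^ (α / β - 1))) := by
        funext t
        by_cases hc : t < b <;> simp [hΦdef, Set.indicator_apply, hc, hbdef]
      rw [hrw, lintegral_indicator measurableSet_Iio,
        Measure.restrict_restrict measurableSet_Iio]
      have hsub : Set.Iio b ∩ Set.Ioi (1 : ℝ) ⊆ Set.Ioc 0 b := fun t ht =>
        ⟨lt_trans one_pos ht.2, ht.1.le⟩
      refine le_trans (lintegral_mono_set hsub) ?_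
      have hint : IntervalIntegrable (fun t : ℝ => t ^ (α / β - 1)) volume 0 b :=
        intervalIntegral.intervalIntegrable_rpow' (by linarith)
      have hIoc : MeasureTheory.IntegrableOn (fun t : ℝ => t ^ (α / β - 1))
          (Set.Ioc 0 b) volume := hint.1
      have hnn : 0 ≤ᵐ[volume.restrict (Set.Ioc (0 : ℝ) b)]
          fun t : ℝ => t ^ (α / β - 1) := by
        refine (ae_restrict_iff' measurableSet_Ioc).2 (ae_of_all _ fun t ht => ?_)
        exact Real.rpow_nonneg ht.1.le _
      rw [← ofReal_integral_eq_lintegral_ofReal hIoc hnn,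
        ← intervalIntegral.integral_of_le hb0,
        integral_rpow (Or.inl (by linarith)), sub_add_cancel,
        Real.zero_rpow hab.ne']
      rw [← ENNReal.ofReal_mul hba.le]
      refine ENNReal.ofReal_le_ofReal (le_of_eq ?_)
      rw [hbdef, ← Real.rpow_mul (hmKnn ω), mul_div_cancel₀ _ hβ.ne']
      field_simp
      ring
    calc ∫⁻ t in Set.Ioi (1 : ℝ),
        ENNReal.ofReal (t ^ (α / β - 1)) * P {ω | t < mK ω ^ β}
        = ∫⁻ t in Set.Ioi (1 : ℝ), ∫⁻ ω, Φ t ω ∂P := by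
          refine lintegral_congr fun t => (step1 t).symm
      _ = ∫⁻ ω, ∫⁻ t, Φ t ω ∂(volume.restrict (Set.Ioi (1 : ℝ))) ∂P :=
          lintegral_lintegral_swap hΦmeas.aemeasurable
      _ ≤ ∫⁻ ω, ENNReal.ofReal (β / α) * ENNReal.ofReal (mK ω ^ α) ∂P :=
          lintegral_mono step2
      _ = ENNReal.ofReal (β / α) * F := lintegral_const_mul' _ _ (by simp)
  -- pointwise bound on `Ioi 1`
  have pointwise : ∀ t : ℝ, 1 < t →
      (P {ω | t < mK ω ^ β}) ^ ((L : ℝ) / K)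
        ≤ F ^ ((L : ℝ) / K - 1)
          * (ENNReal.ofReal (t ^ (α / β - 1)) * P {ω | t < mK ω ^ β}) := by
    intro t ht
    have ht0 : (0 : ℝ) < t := lt_trans one_pos ht
    set p : ℝ≥0∞ := P {ω | t < mK ω ^ β} with hpdef
    set e : ℝ := (L : ℝ) / K - 1 with hedef
    have hX0 : ENNReal.ofReal (t ^ (α / β)) ≠ 0 :=
      (ENNReal.ofReal_pos.mpr (Real.rpow_pos_of_pos ht0 _)).ne'
    have hdiv : p ≤ F / ENNReal.ofReal (t ^ (α / β)) :=
      (ENNReal.le_div_iff_mul_le (Or.inl hX0) (Or.inl ENNReal.ofReal_ne_top)).2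
        (by rw [mul_comm]; exact markov t ht0)
    have harith : -(α / β * e) ≤ α / β - 1 := by
      have h1 : 1 ≤ α / β * ((L : ℝ) / K) := by
        rw [div_mul_div_comm, le_div_iff₀ (by positivity)]
        push_cast
        linarith
      have : α / β * e = α / β * ((L : ℝ) / K) - α / β := by rw [hedef]; ring
      linarith
    calc p ^ ((L : ℝ) / K) = p ^ e * p ^ (1 : ℝ) := by
          rw [← ENNReal.rpow_add_of_nonneg _ _ he0 zero_le_one, hedef, sub_add_cancel]
      _ = p ^ e * p := by rw [ENNReal.rpow_one]
      _ ≤ (F / ENNReal.ofReal (t ^ (α / β))) ^ e * p :=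
          mul_le_mul_left (ENNReal.rpow_le_rpow hdiv he0) _
      _ = F ^ e * ((ENNReal.ofReal (t ^ (α / β))) ^ e)⁻¹ * p := by
          rw [ENNReal.div_rpow_of_nonneg _ _ he0, div_eq_mul_inv]
      _ = F ^ e * (ENNReal.ofReal t) ^ (-(α / β * e)) * p := by
          rw [← ENNReal.ofReal_rpow_of_pos ht0, ← ENNReal.rpow_mul,
            ← ENNReal.rpow_neg]
      _ ≤ F ^ e * (ENNReal.ofReal t) ^ (α / β - 1) * p := by
          refine mul_le_mul_left (mul_le_mul_right
            (ENNReal.rpow_le_rpow_of_exponent_le (ENNReal.one_le_ofReal.2 ht.le)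
              harith) _) _
      _ = F ^ e * (ENNReal.ofReal (t ^ (α / β - 1)) * p) := by
          rw [ENNReal.ofReal_rpow_of_pos ht0, mul_assoc]
  -- assembling
  rw [layerL, ← Set.Ioc_union_Ioi_eq_Ioi (zero_le_one (α := ℝ)),
    lintegral_union measurableSet_Ioi (Set.Ioc_disjoint_Ioi le_rfl)]
  have part1 : ∫⁻ t in Set.Ioc (0 : ℝ) 1, P {ω | t < mL ω ^ β} ≤ 1 := by
    calc ∫⁻ t in Set.Ioc (0 : ℝ) 1, P {ω | t < mL ω ^ β}
        ≤ ∫⁻ _ in Set.Ioc (0 : ℝ) 1, (1 : ℝ≥0∞) := lintegral_mono fun t => prob_le_one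
      _ = 1 := by rw [setLIntegral_const, one_mul, Real.volume_Ioc]; simp
  have part2 : ∫⁻ t in Set.Ioi (1 : ℝ), P {ω | t < mL ω ^ β}
      ≤ ENNReal.ofReal (β / α) * F ^ ((L : ℝ) / K) := by
    have hFe_ne_top : F ^ ((L : ℝ) / K - 1) ≠ ⊤ :=
      ENNReal.rpow_ne_top_of_nonneg he0 hFtop
    calc ∫⁻ t in Set.Ioi (1 : ℝ), P {ω | t < mL ω ^ β}
        = ∫⁻ t in Set.Ioi (1 : ℝ), (P {ω | t < mK ω ^ β}) ^ ((L : ℝ) / K) := by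
          refine setLIntegral_congr_fun measurableSet_Ioi (fun t ht => ?_)
          exact key t (le_of_lt (lt_trans one_pos ht))
      _ ≤ ∫⁻ t in Set.Ioi (1 : ℝ), F ^ ((L : ℝ) / K - 1)
            * (ENNReal.ofReal (t ^ (α / β - 1)) * P {ω | t < mK ω ^ β}) := by
          refine lintegral_mono_ae ((ae_restrict_iff' measurableSet_Ioi).2
            (ae_of_all _ fun t ht => pointwise t ht))
      _ = F ^ ((L : ℝ) / K - 1) * ∫⁻ t in Set.Ioi (1 : ℝ),
            ENNReal.ofReal (t ^ (α / β - 1)) * P {ω | t < mK ω ^ β} :=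
          lintegral_const_mul' _ _ hFe_ne_top
      _ ≤ F ^ ((L : ℝ) / K - 1) * (ENNReal.ofReal (β / α) * F) :=
          mul_le_mul_right hB _
      _ = ENNReal.ofReal (β / α) * (F ^ ((L : ℝ) / K - 1) * F ^ (1 : ℝ)) := by
          rw [ENNReal.rpow_one]; ring
      _ = ENNReal.ofReal (β / α) * F ^ ((L : ℝ) / K) := by
          rw [← ENNReal.rpow_add_of_nonneg _ _ he0 zero_le_one, sub_add_cancel]
  exact add_le_add part1 part2
end
end

section
/- Let (τ_{i,j})_{i,j≥1} be nonnegative i.i.d. random variables. For any reals α > 0, β > 0 and integers K ≥ 1, N ≥ 1 and L ≥ K satisfying βK ≤ αL: E[(min_{1≤i≤L} ∑_{1≤j≤N} τ_{i,j})^β] ≤ N^{L+β} · (1 + (β/α) · E[(min_{1≤i≤K} τ_{i,1})^α]^{L/K}). -/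
open MeasureTheory ProbabilityTheory Filter ENNReal

noncomputable section

section Aux

open MeasureTheory

private lemma aux_measurable_inf' {Ω : Type*} [MeasurableSpace Ω] {ι : Type*}
    {s : Finset ι} (hs : s.Nonempty) {f : ι → Ω → ℝ}
    (hf : ∀ i ∈ s, Measurable (f i)) :
    Measurable fun ω => s.inf' hs fun i => f i ω := by
  have h : Measurable (s.inf' hs f) :=
    Finset.inf'_induction hs f (fun _ ha _ hb => ha.inf' hb) hf
  have he : (fun ω => s.inf' hs fun i => f i ω) = s.inf' hs f := by
    funext ω
    exact (Finset.inf'_apply hs f ω).symm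
  rw [he]; exact h

private lemma aux_measurable_sup' {Ω : Type*} [MeasurableSpace Ω] {ι : Type*}
    {s : Finset ι} (hs : s.Nonempty) {f : ι → Ω → ℝ}
    (hf : ∀ i ∈ s, Measurable (f i)) :
    Measurable fun ω => s.sup' hs fun i => f i ω := by
  have h : Measurable (s.sup' hs f) :=
    Finset.sup'_induction hs f (fun _ ha _ hb => ha.sup' hb) hf
  have he : (fun ω => s.sup' hs fun i => f i ω) = s.sup' hs f := by
    funext ω
    exact (Finset.sup'_apply hs f ω).symm
  rw [he]; exact h

private lemma aux_rpow_split {x : ℝ≥0∞} (hx : x ≠ ∞) {p : ℝ} (hp : 0 < p) :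
    x ^ (p - 1) * x = x ^ p := by
  rcases eq_or_ne x 0 with rfl | h0
  · simp [ENNReal.zero_rpow_of_pos hp]
  · calc x ^ (p - 1) * x = x ^ (p - 1) * x ^ (1 : ℝ) := by rw [ENNReal.rpow_one]
    _ = x ^ (p - 1 + 1) := (ENNReal.rpow_add _ _ h0 hx).symm
    _ = x ^ p := by ring_nf

private lemma aux_sInf_eq_inf' {n : ℕ} (hn : (Finset.range n).Nonempty) (f : ℕ → ℝ) :
    sInf {x | ∃ i < n, x = f i} = (Finset.range n).inf' hn f := by
  rw [Finset.inf'_eq_csInf_image]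
  congr 1
  ext x
  simp only [Finset.coe_range, Set.mem_image, Set.mem_Iio, Set.mem_setOf_eq]
  constructor
  · rintro ⟨i, hi, rfl⟩; exact ⟨i, hi, rfl⟩
  · rintro ⟨i, hi, rfl⟩; exact ⟨i, hi, rfl⟩

end Aux


/-- **Lemma (moment comparison for minima of sums).** For nonnegative i.i.d. `τ_{i,j}` and
`β K ≤ α L` with `1 ≤ K ≤ L`, `1 ≤ N`:
`E[(min_{i<L} ∑_{j<N} τ_{i,j})^β] ≤ N^{L+β} (1 + (β/α) E[(min_{i<K} τ_{i,1})^α]^{L/K})`. -/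
theorem min_sum_moment_comparison {Ω : Type*} [MeasurableSpace Ω]
    (P : Measure Ω) [IsProbabilityMeasure P]
    (τ : ℕ → ℕ → Ω → ℝ) (hmeas : ∀ i j, Measurable (τ i j)) (h0 : ∀ i j ω, 0 ≤ τ i j ω)
    (hindep : ProbabilityTheory.iIndepFun
      (fun p : ℕ × ℕ => τ p.1 p.2) P)
    (hident : ∀ p p' : ℕ × ℕ, ProbabilityTheory.IdentDistrib (τ p.1 p.2) (τ p'.1 p'.2) P P)
    (α β : ℝ) (hα : 0 < α) (hβ : 0 < β)
    (K N L : ℕ) (hK : 1 ≤ K) (hN : 1 ≤ N) (hKL : K ≤ L) (h : β * K ≤ α * L) :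
    ∫⁻ ω, ENNReal.ofReal (sInf {x | ∃ i < L, x = ∑ j ∈ Finset.range N, τ i j ω} ^ β) ∂P ≤
      (N : ℝ≥0∞) ^ ((L : ℝ) + β) *
        (1 + ENNReal.ofReal (β / α) *
          (∫⁻ ω, ENNReal.ofReal (sInf {x | ∃ i < K, x = τ i 0 ω} ^ α) ∂P) ^ ((L : ℝ) / K)) := by
  classical
  have hL1 : 1 ≤ L := le_trans hK hKL
  have hNR : (1:ℝ) ≤ N := by exact_mod_cast hN
  have hKR : (0:ℝ) < K := by exact_mod_cast hK
  have hLR : (0:ℝ) < L := by exact_mod_cast hL1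
  have hNpos : (0:ℝ) < N := by linarith
  set p : ℝ := (L:ℝ)/(K:ℝ) with hp
  have hppos : 0 < p := div_pos hLR hKR
  have hp1 : 1 ≤ p := (one_le_div hKR).2 (by exact_mod_cast hKL)
  have hap : 0 < α * p := by positivity
  set lam : ℝ := β / (α * p) with hlam
  have hlam_pos : 0 < lam := div_pos hβ hap
  have hlam1 : lam ≤ 1 := by
    rw [hlam, div_le_one hap, hp, ← mul_div_assoc]
    exact (le_div_iff₀ hKR).2 (by linarith)
  have hlam_ap : lam * (α * p) = β := div_mul_cancel₀ β hap.ne'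
  have hneL : (Finset.range L).Nonempty := Finset.nonempty_range_iff.2 (by omega)
  have hneN : (Finset.range N).Nonempty := Finset.nonempty_range_iff.2 (by omega)
  have hneK : (Finset.range K).Nonempty := Finset.nonempty_range_iff.2 (by omega)
  set m : Ω → ℝ := fun ω => (Finset.range K).inf' hneK (fun i => τ i 0 ω) with hmdef
  set W : Ω → ℝ := fun ω =>
    (Finset.range L).inf' hneL
      (fun i => (Finset.range N).sup' hneN (fun j => τ i j ω)) with hWdef
  have hmmeas : Measurable m :=
    aux_measurable_inf' hneK (fun i _ => hmeas i 0)
  have hWmeas : Measurable W :=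
    aux_measurable_inf' hneL (fun i _ => aux_measurable_sup' hneN (fun j _ => hmeas i j))
  have hm0 : ∀ ω, 0 ≤ m ω := fun ω => Finset.le_inf' _ _ fun i _ => h0 i 0 ω
  have hW0 : ∀ ω, 0 ≤ W ω := by
    intro ω
    refine Finset.le_inf' _ _ fun i _ => ?_
    exact le_trans (h0 i 0 ω) (Finset.le_sup' (fun j => τ i j ω) (Finset.mem_range.2 hN))
  -- rewrite the K-integral in the goal
  have hKint : (∫⁻ ω, ENNReal.ofReal (sInf {x | ∃ i < K, x = τ i 0 ω} ^ α) ∂P)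
      = ∫⁻ ω, ENNReal.ofReal (m ω ^ α) ∂P :=
    lintegral_congr fun ω => by rw [aux_sInf_eq_inf' hneK (fun i => τ i 0 ω), hmdef]
  rw [hKint]
  set A : ℝ≥0∞ := ∫⁻ ω, ENNReal.ofReal (m ω ^ α) ∂P with hAdef
  set q : ℝ → ℝ≥0∞ := fun u => P {ω | u < τ 0 0 ω} with hqdef
  set NL : ℝ≥0∞ := (N : ℝ≥0∞) ^ L with hNLdef
  have hbne : ENNReal.ofReal (β/α) ≠ 0 := by
    simp only [ne_eq, ENNReal.ofReal_eq_zero, not_le]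
    positivity
  have hN0 : (N : ℝ≥0∞) ≠ 0 := by
    simp only [ne_eq, Nat.cast_eq_zero]; omega
  have hNtop : (N : ℝ≥0∞) ≠ ⊤ := ENNReal.natCast_ne_top N
  have hNL1 : (1:ℝ≥0∞) ≤ NL := by
    rw [hNLdef]
    calc (1:ℝ≥0∞) = 1 ^ L := (one_pow L).symm
    _ ≤ (N : ℝ≥0∞) ^ L := by
        apply pow_le_pow_left' (by exact_mod_cast hN)
  have hNrpow_ne0 : (N:ℝ≥0∞) ^ ((L:ℝ) + β) ≠ 0 := by
    simp [ENNReal.rpow_eq_zero_iff, hN0]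
  by_cases hA : A = ⊤
  · have hR : (N:ℝ≥0∞) ^ ((L:ℝ) + β) * (1 + ENNReal.ofReal (β/α) * A ^ p) = ⊤ := by
      rw [hA, ENNReal.top_rpow_of_pos hppos, ENNReal.mul_top hbne]
      simp [hNrpow_ne0]
    rw [hR]
    exact le_top
  -- identically distributed single variables
  have hq : ∀ (i j : ℕ) (u : ℝ), P {ω | u < τ i j ω} = q u := by
    intro i j u
    have := (hident (i, j) (0, 0)).measure_mem_eq (measurableSet_Ioi (a := u))
    exact this
  -- product formula for m
  have hgK : ∀ u : ℝ, P {ω | u < m ω} = q u ^ K := by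
    intro u
    have hset2 : {ω | u < m ω} =
        ⋂ pr ∈ Finset.image (fun i => (i, 0)) (Finset.range K),
          τ pr.1 pr.2 ⁻¹' Set.Ioi u := by
      ext ω
      simp only [Set.mem_setOf_eq, Set.mem_iInter, Finset.mem_image, Finset.mem_range, hmdef,
        Set.mem_preimage, Set.mem_Ioi]
      constructor
      · rintro hmm pr ⟨i, hi, rfl⟩
        exact (Finset.lt_inf'_iff _).1 hmm i (Finset.mem_range.2 hi)
      · intro hI
        exact (Finset.lt_inf'_iff _).2 fun i hi =>
          hI (i, 0) ⟨i, Finset.mem_range.1 hi, rfl⟩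
    rw [hset2, hindep.meas_biInter (fun pr _ => ⟨Set.Ioi u, measurableSet_Ioi, rfl⟩)]
    rw [Finset.prod_image (by intro a _ b _ hab; simpa using congrArg Prod.fst hab)]
    calc ∏ i ∈ Finset.range K, P (τ (i, 0).1 (i, 0).2 ⁻¹' Set.Ioi u)
        = ∏ _i ∈ Finset.range K, q u := Finset.prod_congr rfl fun i _ => hq i 0 u
    _ = q u ^ K := by rw [Finset.prod_const, Finset.card_range]
  -- union bound for W
  have hWsub : ∀ u : ℝ, {ω | u < W ω} ⊆
      ⋃ φ : Fin L → Fin N, ⋂ i : Fin L, {ω | u < τ i (φ i) ω} := by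
    intro u ω hω
    simp only [Set.mem_setOf_eq, hWdef] at hω
    have h1 : ∀ i ∈ Finset.range L,
        u < (Finset.range N).sup' hneN (fun j => τ i j ω) :=
      (Finset.lt_inf'_iff _).1 hω
    have h2 : ∀ i : Fin L, ∃ j : Fin N, u < τ i j ω := by
      intro i
      obtain ⟨j, hj, hj2⟩ := (Finset.lt_sup'_iff _).1 (h1 i (Finset.mem_range.2 i.2))
      exact ⟨⟨j, Finset.mem_range.1 hj⟩, hj2⟩
    choose φ hφ using h2
    exact Set.mem_iUnion.2 ⟨φ, Set.mem_iInter.2 fun i => hφ i⟩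
  have hWq : ∀ u : ℝ, P {ω | u < W ω} ≤ NL * q u ^ L := by
    intro u
    calc P {ω | u < W ω}
        ≤ P (⋃ φ : Fin L → Fin N, ⋂ i : Fin L, {ω | u < τ i (φ i) ω}) :=
          measure_mono (hWsub u)
    _ ≤ ∑ φ : Fin L → Fin N, P (⋂ i : Fin L, {ω | u < τ i (φ i) ω}) :=
          measure_iUnion_fintype_le _ _
    _ = ∑ _φ : Fin L → Fin N, q u ^ L := by
        refine Finset.sum_congr rfl fun φ _ => ?_
        have hInter : (⋂ i : Fin L, {ω | u < τ i (φ i) ω}) =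
            ⋂ pr ∈ Finset.image (fun i : Fin L => ((i : ℕ), (φ i : ℕ))) Finset.univ,
              τ pr.1 pr.2 ⁻¹' Set.Ioi u := by
          ext ω
          simp only [Set.mem_iInter, Finset.mem_image, Finset.mem_univ, true_and,
            Set.mem_setOf_eq, Set.mem_preimage, Set.mem_Ioi]
          constructor
          · rintro hI pr ⟨i, rfl⟩
            exact hI i
          · intro hI i
            exact hI _ ⟨i, rfl⟩
        rw [hInter, hindep.meas_biInter (fun pr _ => ⟨Set.Ioi u, measurableSet_Ioi, rfl⟩)]
        rw [Finset.prod_image (by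
          intro a _ b _ hab
          exact Fin.ext (by simpa using congrArg Prod.fst hab))]
        calc ∏ i : Fin L, P (τ (((i:ℕ), ((φ i : ℕ)))).1 (((i:ℕ), ((φ i : ℕ)))).2 ⁻¹' Set.Ioi u)
            = ∏ _i : Fin L, q u := Finset.prod_congr rfl fun i _ => hq i (φ i) u
        _ = q u ^ L := by rw [Finset.prod_const, Finset.card_univ, Fintype.card_fin]
    _ = NL * q u ^ L := by
        rw [Finset.sum_const, Finset.card_univ, Fintype.card_fun, Fintype.card_fin,
          Fintype.card_fin, nsmul_eq_mul, Nat.cast_pow, hNLdef]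
  -- Markov
  have hmarkov : ∀ t : ℝ, 0 < t → ENNReal.ofReal (t ^ α) * P {ω | t < m ω} ≤ A := by
    intro t ht
    have hmeas2 : Measurable fun ω => ENNReal.ofReal (m ω ^ α) :=
      (hmmeas.pow measurable_const).ennreal_ofReal
    calc ENNReal.ofReal (t ^ α) * P {ω | t < m ω}
        = ∫⁻ _ω in {ω | t < m ω}, ENNReal.ofReal (t ^ α) ∂P := (setLIntegral_const _ _).symm
    _ ≤ ∫⁻ ω in {ω | t < m ω}, ENNReal.ofReal (m ω ^ α) ∂P := by
        refine setLIntegral_mono hmeas2 fun ω hω => ?_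
        exact ENNReal.ofReal_le_ofReal (Real.rpow_le_rpow ht.le (le_of_lt hω) hα.le)
    _ ≤ A := setLIntegral_le_lintegral _ _
  -- layer cake for m
  set J : ℝ≥0∞ := ∫⁻ t in Set.Ioi (0:ℝ), P {a | t < m a} * ENNReal.ofReal (t ^ (α - 1)) with hJdef
  have hlcm : A = ENNReal.ofReal α * J := by
    rw [hAdef, hJdef]
    exact lintegral_rpow_eq_lintegral_meas_lt_mul P (ae_of_all _ hm0) hmmeas.aemeasurable hα
  -- layer cake for W
  set IW : ℝ≥0∞ := ∫⁻ ω, ENNReal.ofReal (W ω ^ (α * p)) ∂P with hIWdef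
  have hlcW : IW = ENNReal.ofReal (α * p) *
      ∫⁻ t in Set.Ioi (0:ℝ), P {a | t < W a} * ENNReal.ofReal (t ^ (α * p - 1)) := by
    rw [hIWdef]
    exact lintegral_rpow_eq_lintegral_meas_lt_mul P (ae_of_all _ hW0) hWmeas.aemeasurable hap
  have hAp1top : A ^ (p - 1) ≠ ⊤ := ENNReal.rpow_ne_top_of_nonneg (by linarith) hA
  have hNLtop : NL ≠ ⊤ := by
    rw [hNLdef]; exact ENNReal.pow_ne_top hNtop
  -- pointwise bound on the tail integrand
  have hpt : ∀ t ∈ Set.Ioi (0:ℝ),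
      P {a | t < W a} * ENNReal.ofReal (t ^ (α * p - 1)) ≤
        (NL * A ^ (p - 1)) * (P {ω | t < m ω} * ENNReal.ofReal (t ^ (α - 1))) := by
    intro t ht
    rw [Set.mem_Ioi] at ht
    have eKp : (K:ℝ) * p = (L:ℝ) := by
      rw [hp, mul_comm]; exact div_mul_cancel₀ _ hKR.ne'
    have e2 : q t ^ L = P {ω | t < m ω} ^ p := by
      rw [hgK t, ← ENNReal.rpow_natCast (q t) L, ← ENNReal.rpow_natCast (q t) K,
        ← ENNReal.rpow_mul, eKp]
    have e3 : P {ω | t < m ω} ^ p = P {ω | t < m ω} ^ (p-1) * P {ω | t < m ω} :=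
      (aux_rpow_split (measure_ne_top P _) hppos).symm
    have e4 : ENNReal.ofReal (t ^ (α * p - 1)) =
        ENNReal.ofReal (t ^ (α * (p - 1))) * ENNReal.ofReal (t ^ (α - 1)) := by
      rw [← ENNReal.ofReal_mul (Real.rpow_nonneg ht.le _), ← Real.rpow_add ht]
      congr 2
      ring
    have e5 : ENNReal.ofReal (t ^ (α * (p - 1))) * P {ω | t < m ω} ^ (p-1) ≤ A ^ (p-1) := by
      calc ENNReal.ofReal (t ^ (α * (p - 1))) * P {ω | t < m ω} ^ (p-1)
          = (ENNReal.ofReal (t ^ α)) ^ (p-1) * P {ω | t < m ω} ^ (p-1) := by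
            rw [Real.rpow_mul ht.le, ← ENNReal.ofReal_rpow_of_pos (Real.rpow_pos_of_pos ht α)]
      _ = (ENNReal.ofReal (t ^ α) * P {ω | t < m ω}) ^ (p-1) :=
            (ENNReal.mul_rpow_of_nonneg _ _ (by linarith)).symm
      _ ≤ A ^ (p-1) := ENNReal.rpow_le_rpow (hmarkov t ht) (by linarith)
    calc P {a | t < W a} * ENNReal.ofReal (t ^ (α * p - 1))
        ≤ (NL * q t ^ L) * ENNReal.ofReal (t ^ (α * p - 1)) :=
          mul_le_mul_left (hWq t) _
    _ = NL * ((ENNReal.ofReal (t ^ (α * (p - 1))) * P {ω | t < m ω} ^ (p-1)) *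
          (P {ω | t < m ω} * ENNReal.ofReal (t ^ (α - 1)))) := by
        rw [e2, e3, e4]; ring
    _ ≤ NL * (A ^ (p-1) * (P {ω | t < m ω} * ENNReal.ofReal (t ^ (α - 1)))) := by
        exact mul_le_mul_right (mul_le_mul_left e5 _) _
    _ = (NL * A ^ (p - 1)) * (P {ω | t < m ω} * ENNReal.ofReal (t ^ (α - 1))) := by ring
  have hIW2 : (∫⁻ t in Set.Ioi (0:ℝ),
      P {a | t < W a} * ENNReal.ofReal (t ^ (α * p - 1))) ≤ (NL * A ^ (p - 1)) * J := by
    have hae : ∀ᵐ t ∂(volume.restrict (Set.Ioi (0:ℝ))),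
        P {a | t < W a} * ENNReal.ofReal (t ^ (α * p - 1)) ≤
          (NL * A ^ (p - 1)) * (P {ω | t < m ω} * ENNReal.ofReal (t ^ (α - 1))) := by
      filter_upwards [self_mem_ae_restrict measurableSet_Ioi] with t ht
      exact hpt t ht
    calc (∫⁻ t in Set.Ioi (0:ℝ), P {a | t < W a} * ENNReal.ofReal (t ^ (α * p - 1)))
        ≤ ∫⁻ t in Set.Ioi (0:ℝ),
            (NL * A ^ (p - 1)) * (P {ω | t < m ω} * ENNReal.ofReal (t ^ (α - 1))) :=
          lintegral_mono_ae hae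
    _ = (NL * A ^ (p - 1)) * J := by
        rw [hJdef]
        exact lintegral_const_mul' _ _ (ENNReal.mul_ne_top hNLtop hAp1top)
  -- pointwise AM-GM bound
  have key : ∀ ω, sInf {x | ∃ i < L, x = ∑ j ∈ Finset.range N, τ i j ω} ^ β ≤
      (N:ℝ) ^ β * (1 + lam * W ω ^ (α * p)) := by
    intro ω
    rw [aux_sInf_eq_inf' hneL (fun i => ∑ j ∈ Finset.range N, τ i j ω)]
    set Mv := (Finset.range L).inf' hneL (fun i => ∑ j ∈ Finset.range N, τ i j ω) with hMv
    have hM0 : 0 ≤ Mv :=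
      Finset.le_inf' _ _ fun i _ => Finset.sum_nonneg fun j _ => h0 i j ω
    have hWw : W ω = (Finset.range L).inf' hneL
        (fun i => (Finset.range N).sup' hneN (fun j => τ i j ω)) := rfl
    have hMle : Mv ≤ (N:ℝ) * W ω := by
      obtain ⟨i0, hi0, hWi⟩ := Finset.exists_mem_eq_inf' hneL
        (fun i => (Finset.range N).sup' hneN (fun j => τ i j ω))
      have hsum : ∑ j ∈ Finset.range N, τ i0 j ω ≤
          (N:ℝ) * (Finset.range N).sup' hneN (fun j => τ i0 j ω) := by
        have := Finset.sum_le_card_nsmul (Finset.range N) (fun j => τ i0 j ω)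
          ((Finset.range N).sup' hneN (fun j => τ i0 j ω))
          (fun j hj => Finset.le_sup' (fun j => τ i0 j ω) hj)
        simpa [Finset.card_range, nsmul_eq_mul] using this
      calc Mv ≤ ∑ j ∈ Finset.range N, τ i0 j ω := Finset.inf'_le _ hi0
      _ ≤ (N:ℝ) * (Finset.range N).sup' hneN (fun j => τ i0 j ω) := hsum
      _ = (N:ℝ) * W ω := by rw [hWw, hWi]
    have h1 : Mv ^ β ≤ ((N:ℝ) * W ω) ^ β := Real.rpow_le_rpow hM0 hMle hβ.le
    have h2 : ((N:ℝ) * W ω) ^ β = (N:ℝ) ^ β * W ω ^ β :=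
      Real.mul_rpow hNpos.le (hW0 ω)
    have h3 : W ω ^ β = (W ω ^ (α * p)) ^ lam := by
      rw [← Real.rpow_mul (hW0 ω)]
      congr 1
      linear_combination hlam_ap.symm
    have h4 : (W ω ^ (α * p)) ^ lam ≤ 1 + lam * W ω ^ (α * p) := by
      have hg := Real.geom_mean_le_arith_mean2_weighted hlam_pos.le
        (by linarith : (0:ℝ) ≤ 1 - lam) (Real.rpow_nonneg (hW0 ω) (α * p)) zero_le_one
        (by ring)
      rw [Real.one_rpow, mul_one, mul_one] at hg
      linarith
    calc Mv ^ β ≤ ((N:ℝ) * W ω) ^ β := h1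
    _ = (N:ℝ) ^ β * W ω ^ β := h2
    _ = (N:ℝ) ^ β * (W ω ^ (α * p)) ^ lam := by rw [h3]
    _ ≤ (N:ℝ) ^ β * (1 + lam * W ω ^ (α * p)) :=
        mul_le_mul_of_nonneg_left h4 (Real.rpow_nonneg hNpos.le _)
  -- integrate the pointwise bound
  have step1 : (∫⁻ ω, ENNReal.ofReal
        (sInf {x | ∃ i < L, x = ∑ j ∈ Finset.range N, τ i j ω} ^ β) ∂P) ≤
      ENNReal.ofReal ((N:ℝ) ^ β) * (1 + ENNReal.ofReal lam * IW) := by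
    have hb : ∀ ω, ENNReal.ofReal
        (sInf {x | ∃ i < L, x = ∑ j ∈ Finset.range N, τ i j ω} ^ β) ≤
        ENNReal.ofReal ((N:ℝ) ^ β) *
          (1 + ENNReal.ofReal lam * ENNReal.ofReal (W ω ^ (α * p))) := by
      intro ω
      have hwnn : 0 ≤ W ω ^ (α * p) := Real.rpow_nonneg (hW0 ω) _
      refine le_trans (ENNReal.ofReal_le_ofReal (key ω)) ?_
      rw [ENNReal.ofReal_mul (by positivity),
        ENNReal.ofReal_add zero_le_one (by positivity), ENNReal.ofReal_one,
        ENNReal.ofReal_mul hlam_pos.le]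
    calc (∫⁻ ω, ENNReal.ofReal
          (sInf {x | ∃ i < L, x = ∑ j ∈ Finset.range N, τ i j ω} ^ β) ∂P)
        ≤ ∫⁻ ω, ENNReal.ofReal ((N:ℝ) ^ β) *
            (1 + ENNReal.ofReal lam * ENNReal.ofReal (W ω ^ (α * p))) ∂P :=
          lintegral_mono hb
    _ = ENNReal.ofReal ((N:ℝ) ^ β) * (1 + ENNReal.ofReal lam * IW) := by
        rw [lintegral_const_mul' _ _ ENNReal.ofReal_ne_top,
          lintegral_add_left measurable_const,
          lintegral_const_mul' _ _ ENNReal.ofReal_ne_top, lintegral_one, measure_univ,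
          hIWdef]
  -- combine
  have main2 : ENNReal.ofReal lam * IW ≤ ENNReal.ofReal (β/α) * (NL * A ^ p) := by
    calc ENNReal.ofReal lam * IW
        ≤ ENNReal.ofReal lam * (ENNReal.ofReal (α * p) * ((NL * A ^ (p - 1)) * J)) := by
          rw [hlcW]
          exact mul_le_mul_right (mul_le_mul_right hIW2 _) _
    _ = (ENNReal.ofReal lam * ENNReal.ofReal (α * p)) * (NL * (A ^ (p - 1) * J)) := by
          ring
    _ = ENNReal.ofReal β * (NL * (A ^ (p - 1) * J)) := by
          rw [← ENNReal.ofReal_mul hlam_pos.le, hlam_ap]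
    _ = ENNReal.ofReal (β/α) * (NL * (A ^ (p - 1) * (ENNReal.ofReal α * J))) := by
          have hofβ : ENNReal.ofReal β = ENNReal.ofReal (β/α) * ENNReal.ofReal α := by
            rw [← ENNReal.ofReal_mul (by positivity : (0:ℝ) ≤ β/α),
              div_mul_cancel₀ β hα.ne']
          rw [hofβ]
          ring
    _ = ENNReal.ofReal (β/α) * (NL * (A ^ (p - 1) * A)) := by rw [← hlcm]
    _ = ENNReal.ofReal (β/α) * (NL * A ^ p) := by rw [aux_rpow_split hA hppos]
  have hofN : ENNReal.ofReal ((N:ℝ) ^ β) = (N:ℝ≥0∞) ^ β := by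
    rw [← ENNReal.ofReal_rpow_of_pos hNpos, ENNReal.ofReal_natCast]
  calc (∫⁻ ω, ENNReal.ofReal
        (sInf {x | ∃ i < L, x = ∑ j ∈ Finset.range N, τ i j ω} ^ β) ∂P)
      ≤ ENNReal.ofReal ((N:ℝ) ^ β) * (1 + ENNReal.ofReal lam * IW) := step1
  _ ≤ (N:ℝ≥0∞) ^ β * (1 + ENNReal.ofReal (β/α) * (NL * A ^ p)) := by
      rw [hofN]
      exact mul_le_mul_right (add_le_add_right main2 _) _
  _ ≤ (N:ℝ≥0∞) ^ ((L:ℝ) + β) * (1 + ENNReal.ofReal (β/α) * A ^ p) := by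
      have hstep : 1 + ENNReal.ofReal (β/α) * (NL * A ^ p) ≤
          NL * (1 + ENNReal.ofReal (β/α) * A ^ p) := by
        rw [mul_add, mul_one]
        exact add_le_add hNL1 (le_of_eq (by ring))
      calc (N:ℝ≥0∞) ^ β * (1 + ENNReal.ofReal (β/α) * (NL * A ^ p))
          ≤ (N:ℝ≥0∞) ^ β * (NL * (1 + ENNReal.ofReal (β/α) * A ^ p)) :=
            mul_le_mul_right hstep _
      _ = (N:ℝ≥0∞) ^ ((L:ℝ) + β) * (1 + ENNReal.ofReal (β/α) * A ^ p) := by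
          rw [ENNReal.rpow_add _ _ hN0 hNtop, hNLdef, ← ENNReal.rpow_natCast (N:ℝ≥0∞) L]
          ring
end
end
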